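/- Let g : ℝ → ℝ be C¹ with 0 ≤ g'(s) ≤ Λ₁ − ε for all s (for some ε > 0), and let G be an antiderivative of g. Let H be a real Hilbert space of functions, T a symmetric positive operator with Λ₁⟨Tρ, Tρ⟩ ≤ ⟨ρ, Tρ⟩ for all ρ (abstracting the spectral gap inequality Λ₁∫(Tρ)² ≤ ∫ρ·Tρ). Suppose ω = g(ψ) pointwise and ψ = Tω + h for fixed h. If ρ ≠ 0 satisfies ∫ Ĝ(ω + ρ) = ∫ Ĝ(ω) (where Ĝ is the Legendre transform of G), then −(1/2)∫ρ·Tρ − ∫ψ·ρ ≥ (ε/2)∫(Tρ)² > 0. -/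

import Mathlib

open MeasureTheory

/-- If `f' ≤ 0` left of `a` and `0 ≤ f'` right of `a`, then `f` has a global min at `a`. -/
lemma min_at {f f' : ℝ → ℝ} (hf : ∀ x, HasDerivAt f (f' x) x) (a : ℝ)
    (hneg : ∀ x, x ≤ a → f' x ≤ 0) (hpos : ∀ x, a ≤ x → 0 ≤ f' x) (x : ℝ) :
    f a ≤ f x := by
  have hdiff : Differentiable ℝ f := fun y => (hf y).differentiableAt
  have hderiv : ∀ y, deriv f y = f' y := fun y => (hf y).deriv
  rcases le_total x a with hx | hx
  · have hA : AntitoneOn f (Set.Iic a) :=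
      antitoneOn_of_deriv_nonpos (convex_Iic a) hdiff.continuous.continuousOn
        (hdiff.differentiableOn)
        (fun y hy => by
          rw [hderiv]
          exact hneg y (le_of_lt (by simpa [interior_Iic] using hy)))
    exact hA (Set.mem_Iic.2 hx) (Set.mem_Iic.2 le_rfl) hx
  · have hM : MonotoneOn f (Set.Ici a) :=
      monotoneOn_of_deriv_nonneg (convex_Ici a) hdiff.continuous.continuousOn
        (hdiff.differentiableOn)
        (fun y hy => by
          rw [hderiv]
          exact hpos y (le_of_lt (by simpa [interior_Ici] using hy)))
    exact hM (Set.mem_Ici.2 le_rfl) (Set.mem_Ici.2 hx) hx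

/-- The key pointwise Fenchel–Young / Taylor estimate. -/
lemma pointwise_est {g G Ghat : ℝ → ℝ} {L : ℝ}
    (hgdiff : Differentiable ℝ g) (hg'0 : ∀ s, 0 ≤ deriv g s) (hg'L : ∀ s, deriv g s ≤ L)
    (hG : ∀ s : ℝ, HasDerivAt G (g s) s)
    (hGhat : ∀ s : ℝ, IsLUB {y : ℝ | ∃ τ : ℝ, y = s * τ - G τ} (Ghat s))
    (p r σ : ℝ) :
    p * r + r * σ - L / 2 * σ ^ 2 ≤ Ghat (g p + r) - Ghat (g p) := by
  have gmono : Monotone g := monotone_of_deriv_nonneg hgdiff hg'0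
  -- `L x - g x` is monotone
  have kd : ∀ x : ℝ, HasDerivAt (fun y => L * y - g y) (L - deriv g x) x := fun x => by
    simpa [Pi.sub_def] using ((hasDerivAt_id x).const_mul L).sub (hgdiff x).hasDerivAt
  have kmono : Monotone (fun y => L * y - g y) :=
    monotone_of_deriv_nonneg (fun x => (kd x).differentiableAt)
      (fun x => by rw [(kd x).deriv]; linarith [hg'L x])
  -- Fenchel equality at p : Ghat (g p) = g p * p - G p
  have hGeq : Ghat (g p) = g p * p - G p := by
    have hmem : g p * p - G p ≤ Ghat (g p) := (hGhat (g p)).1 ⟨p, rfl⟩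
    have hub : Ghat (g p) ≤ g p * p - G p := by
      apply (hGhat (g p)).2
      rintro y ⟨τ, rfl⟩
      have md : ∀ x : ℝ, HasDerivAt (fun y => G y - g p * y) (g x - g p) x := fun x => by
        simpa [Pi.sub_def] using (hG x).sub ((hasDerivAt_id x).const_mul (g p))
      have := min_at md p
        (fun x hx => by simpa [sub_nonpos] using gmono hx)
        (fun x hx => by simpa [sub_nonneg] using gmono hx) τ
      nlinarith [this]
    linarith
  -- Taylor bound : G (p + σ) ≤ G p + g p * σ + L/2 * σ^2
  have htaylor : G (p + σ) ≤ G p + g p * σ + L / 2 * σ ^ 2 := by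
    set f : ℝ → ℝ := fun t => -(G (p + t) - G p - g p * t - L / 2 * t ^ 2) with hfdef
    have fd : ∀ t : ℝ, HasDerivAt f (-(g (p + t) - g p - L * t)) t := by
      intro t
      have h1 : HasDerivAt (fun y : ℝ => G (p + y)) (g (p + t)) t := by
        simpa [Function.comp_def] using (hG (p + t)).comp t ((hasDerivAt_const t p).add (hasDerivAt_id t))
      have h2 : HasDerivAt (fun y : ℝ => g p * y) (g p) t := by
        simpa using (hasDerivAt_id t).const_mul (g p)
      have h3 : HasDerivAt (fun y : ℝ => L / 2 * y ^ 2) (L * t) t := by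
        have := (hasDerivAt_pow 2 t).const_mul (L / 2)
        refine this.congr_deriv ?_
        push_cast
        ring
      simpa [hfdef, Pi.sub_def, Pi.neg_def] using ((h1.sub (hasDerivAt_const t (G p))).sub h2).sub h3 |>.neg
    have := min_at fd 0
      (fun t ht => by
        have hk := kmono (show p + t ≤ p by linarith)
        simp only [] at hk ⊢
        nlinarith)
      (fun t ht => by
        have hk := kmono (show p ≤ p + t by linarith)
        simp only [] at hk ⊢
        nlinarith) σ
    simp only [hfdef] at this
    norm_num at this
    linarith
  -- Fenchel–Young at ω + ρ with τ = p + σ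
  have hmem2 : (g p + r) * (p + σ) - G (p + σ) ≤ Ghat (g p + r) :=
    (hGhat (g p + r)).1 ⟨p + σ, rfl⟩
  rw [hGeq]
  nlinarith [hmem2, htaylor]

theorem stmt_19 {X : Type*} [MeasurableSpace X] (μ : Measure X)
    (g G Ghat : ℝ → ℝ) (Λ1 ε : ℝ) (hε : 0 < ε)
    (hg : ContDiff ℝ 1 g)
    (hg' : ∀ s : ℝ, 0 ≤ deriv g s ∧ deriv g s ≤ Λ1 - ε)
    (hG : ∀ s : ℝ, HasDerivAt G (g s) s)
    (hGhat : ∀ s : ℝ, IsLUB {y : ℝ | ∃ τ : ℝ, y = s * τ - G τ} (Ghat s))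
    (T : (X → ℝ) → (X → ℝ))
    (hTadd : ∀ f₁ f₂ : X → ℝ, T (fun x => f₁ x + f₂ x) = fun x => T f₁ x + T f₂ x)
    (hTsmul : ∀ (c : ℝ) (f : X → ℝ), T (fun x => c * f x) = fun x => c * T f x)
    (hTsym : ∀ f₁ f₂ : X → ℝ, (∫ x, T f₁ x * f₂ x ∂μ) = ∫ x, f₁ x * T f₂ x ∂μ)
    (hTpos : ∀ f : X → ℝ, ¬ f =ᵐ[μ] 0 → 0 < ∫ x, f x * T f x ∂μ)
    (hgap : ∀ f : X → ℝ, Λ1 * (∫ x, (T f x) ^ 2 ∂μ) ≤ ∫ x, f x * T f x ∂μ)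
    (ω ψ ρ h : X → ℝ)
    (hωψ : ∀ᵐ x ∂μ, ω x = g (ψ x))
    (hψ : ψ = fun x => T ω x + h x)
    (hρ : ¬ ρ =ᵐ[μ] 0)
    (hint1 : Integrable (fun x => (T ρ x) ^ 2) μ)
    (hint2 : Integrable (fun x => ρ x * T ρ x) μ)
    (hint3 : Integrable (fun x => ψ x * ρ x) μ)
    (hint4 : Integrable (fun x => Ghat (ω x + ρ x)) μ)
    (hint5 : Integrable (fun x => Ghat (ω x)) μ)
    (hGconst : (∫ x, Ghat (ω x + ρ x) ∂μ) = ∫ x, Ghat (ω x) ∂μ) :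
    (ε / 2) * (∫ x, (T ρ x) ^ 2 ∂μ) ≤
      -(1 / 2) * (∫ x, ρ x * T ρ x ∂μ) - (∫ x, ψ x * ρ x ∂μ) ∧
    0 < (ε / 2) * (∫ x, (T ρ x) ^ 2 ∂μ) := by
  set L : ℝ := Λ1 - ε with hLdef
  have hgdiff : Differentiable ℝ g := hg.differentiable one_ne_zero
  -- the a.e. pointwise estimate
  have hae : (fun x => ψ x * ρ x + ρ x * T ρ x - L / 2 * (T ρ x) ^ 2) ≤ᵐ[μ]
      (fun x => Ghat (ω x + ρ x) - Ghat (ω x)) := by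
    filter_upwards [hωψ] with x hx
    have := pointwise_est hgdiff (fun s => (hg' s).1) (fun s => (hg' s).2) hG hGhat
      (ψ x) (ρ x) (T ρ x)
    rw [hx]
    exact this
  have hintL : Integrable (fun x => ψ x * ρ x + ρ x * T ρ x - L / 2 * (T ρ x) ^ 2) μ :=
    (hint3.add hint2).sub (hint1.const_mul (L / 2))
  have key := integral_mono_ae hintL (hint4.sub hint5) hae
  simp only [Pi.sub_apply] at key
  rw [integral_sub hint4 hint5, hGconst, sub_self] at key
  have hi32 : Integrable (fun x => ψ x * ρ x + ρ x * T ρ x) μ := hint3.add hint2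
  have hiL : Integrable (fun x => L / 2 * (T ρ x) ^ 2) μ := hint1.const_mul (L / 2)
  rw [integral_sub hi32 hiL, integral_add hint3 hint2, integral_const_mul] at key
  -- positivity of ∫ (Tρ)²
  have hA0 : 0 ≤ ∫ x, (T ρ x) ^ 2 ∂μ := integral_nonneg fun x => sq_nonneg _
  have hApos : 0 < ∫ x, (T ρ x) ^ 2 ∂μ := by
    rcases hA0.lt_or_eq with hlt | heq
    · exact hlt
    · exfalso
      have hz : (fun x => (T ρ x) ^ 2) =ᵐ[μ] 0 :=
        (integral_eq_zero_iff_of_nonneg (fun x => sq_nonneg _) hint1).1 heq.symm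
      have hz2 : (fun x => ρ x * T ρ x) =ᵐ[μ] 0 := by
        filter_upwards [hz] with x hx
        have hx' : T ρ x ^ 2 = 0 := hx
        have : T ρ x = 0 := by nlinarith [sq_abs (T ρ x)]
        simp [this]
      have : (∫ x, ρ x * T ρ x ∂μ) = 0 := integral_eq_zero_of_ae hz2
      linarith [hTpos ρ hρ]
  have hgapρ := hgap ρ
  refine ⟨by linarith, by positivity⟩
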